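/- arXiv:2011.06435 — 2 statements merged into one kernel-verified Lean document; each statement's English description precedes it below -/
import Mathlib

section
/- Every graph of odd order is switching-equivalent to a graph in which every vertex has even degree, and this even graph is unique in its switching class. -/
open Matrix Finset

/-- Seidel switching of a graph with respect to a set of vertices `A`. -/
def switchGraph {n : ℕ} (G : SimpleGraph (Fin n)) (A : Finset (Fin n)) :
    SimpleGraph (Fin n) where
  Adj v w := v ≠ w ∧ (G.Adj v w ↔ ((v ∈ A) ↔ (w ∈ A)))
  symm := by
    constructor
    intro v w ⟨h1, h2⟩
    exact ⟨h1.symm, by rw [G.adj_comm]; tauto⟩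
  loopless := ⟨fun v h => h.1 rfl⟩

open scoped Classical

lemma even_iff_zmod (m : ℕ) : Even m ↔ (m : ZMod 2) = 0 := by
  rw [ZMod.natCast_eq_zero_iff]
  constructor
  · rintro ⟨k, hk⟩; exact ⟨k, by omega⟩
  · rintro ⟨k, hk⟩; exact ⟨k, by omega⟩

lemma odd_iff_zmod (m : ℕ) : Odd m ↔ (m : ZMod 2) = 1 := by
  rw [Nat.odd_iff, ← ZMod.natCast_mod]
  constructor
  · intro h; rw [h]; rfl
  · intro h
    rcases Nat.mod_two_eq_zero_or_one m with h0 | h1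
    · rw [h0] at h; exact absurd h (by decide)
    · exact h1

lemma ncard_eq_degree {n : ℕ} (H : SimpleGraph (Fin n)) (v : Fin n) :
    (H.neighborSet v).ncard = H.degree v := by
  rw [← SimpleGraph.card_neighborFinset_eq_degree, ← Set.ncard_coe_finset]
  congr 1
  exact (Set.coe_toFinset _).symm

lemma deg_switch {n : ℕ} (G : SimpleGraph (Fin n)) (A : Finset (Fin n)) (v : Fin n) :
    (((switchGraph G A).degree v : ZMod 2)) =
      (G.degree v : ZMod 2) + (n : ZMod 2) * (if v ∈ A then 1 else 0) + (A.card : ZMod 2) := by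
  have key : ∀ w, (if (switchGraph G A).Adj v w then (1 : ZMod 2) else 0) =
      (if G.Adj v w then 1 else 0) + (if v ∈ A then 1 else 0) + (if w ∈ A then 1 else 0) := by
    intro w
    by_cases hw : v = w
    · subst hw
      by_cases h : v ∈ A <;> simp [switchGraph, h] <;> decide
    · by_cases h1 : G.Adj v w <;> by_cases h2 : v ∈ A <;> by_cases h3 : w ∈ A <;>
        simp [switchGraph, hw, h1, h2, h3] <;> decide
  have hdeg : ∀ (H : SimpleGraph (Fin n)) (v : Fin n),
      (H.degree v : ZMod 2) = ∑ w, (if H.Adj v w then (1 : ZMod 2) else 0) := by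
    intro H v
    rw [Finset.sum_boole, ← SimpleGraph.card_neighborFinset_eq_degree]
    congr 2
    ext w
    simp
  rw [hdeg, hdeg]
  simp only [key]
  rw [Finset.sum_add_distrib, Finset.sum_add_distrib]
  congr 1
  · congr 1
    rw [Finset.sum_const, Finset.card_univ, Fintype.card_fin, nsmul_eq_mul]
  · rw [Finset.sum_boole, Finset.filter_univ_mem]

lemma switch_compl {n : ℕ} (G : SimpleGraph (Fin n)) (A : Finset (Fin n)) :
    switchGraph G Aᶜ = switchGraph G A := by
  ext v w
  simp only [switchGraph, Finset.mem_compl]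
  tauto

theorem unique_even_graph_in_switching_class {n : ℕ} (hn : Odd n)
    (G : SimpleGraph (Fin n)) :
    ∃! H : SimpleGraph (Fin n),
      (∃ A : Finset (Fin n), switchGraph G A = H) ∧
      (∀ v, Even (H.neighborSet v).ncard) := by
  have h20 : (2 : ZMod 2) = 0 := by decide
  have hn2 : (n : ZMod 2) = 1 := (odd_iff_zmod n).mp hn
  have hcond : ∀ (B : Finset (Fin n)),
      (∀ v, Even ((switchGraph G B).neighborSet v).ncard) ↔
      (∀ v, (G.degree v : ZMod 2) + (if v ∈ B then 1 else 0) + (B.card : ZMod 2) = 0) := by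
    intro B
    apply forall_congr'
    intro v
    rw [ncard_eq_degree, even_iff_zmod, deg_switch, hn2, one_mul]
  set A : Finset (Fin n) := Finset.univ.filter (fun v => Odd (G.degree v)) with hA
  have hmemA : ∀ v, ((if v ∈ A then (1 : ZMod 2) else 0)) = (G.degree v : ZMod 2) := by
    intro v
    by_cases h : Odd (G.degree v)
    · rw [if_pos (by simp [hA, h]), (odd_iff_zmod _).mp h]
    · rw [if_neg (by simp [hA, h]), (even_iff_zmod _).mp (Nat.not_odd_iff_even.mp h)]
  have hAcard : (A.card : ZMod 2) = 0 := by
    have h1 : ((A.card : ℕ) : ZMod 2) = ∑ v, (G.degree v : ZMod 2) := by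
      rw [hA, ← Finset.sum_boole]
      refine Finset.sum_congr rfl fun v _ => ?_
      rw [← hmemA v]
      simp [hA]
    have h2 : (∑ v, (G.degree v : ZMod 2)) = 0 := by
      have hh := G.sum_degrees_eq_twice_card_edges
      have hcast : (∑ v, (G.degree v : ZMod 2)) = ((∑ v, G.degree v : ℕ) : ZMod 2) := by
        push_cast; rfl
      rw [hcast, hh]
      push_cast
      rw [h20]; ring
    rw [h1, h2]
  have hAeven : ∀ v, (G.degree v : ZMod 2) + (if v ∈ A then 1 else 0) + (A.card : ZMod 2) = 0 := by
    intro v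
    rw [hmemA v, hAcard, add_zero, ← two_mul, h20, zero_mul]
  refine ⟨switchGraph G A, ⟨⟨A, rfl⟩, (hcond A).mpr hAeven⟩, ?_⟩
  rintro H ⟨⟨B, rfl⟩, hB⟩
  have hBeven := (hcond B).mp hB
  have hrel : ∀ v, (if v ∈ B then (1:ZMod 2) else 0) + (B.card : ZMod 2)
      = (if v ∈ A then 1 else 0) + (A.card : ZMod 2) := by
    intro v
    linear_combination hBeven v - hAeven v
  have hcases : (B.card : ZMod 2) = (A.card : ZMod 2) ∨
      (B.card : ZMod 2) = (A.card : ZMod 2) + 1 := by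
    have hall : ∀ x : ZMod 2, x = 0 ∨ x = 1 := by decide
    rcases hall ((B.card : ZMod 2) - A.card) with h | h
    · left; linear_combination h
    · right; linear_combination h
  rcases hcases with h | h
  · have hAB : B = A := by
      ext v
      have hv := hrel v
      rw [h] at hv
      have h2 : (if v ∈ B then (1:ZMod 2) else 0) = (if v ∈ A then 1 else 0) := by
        linear_combination hv
      by_cases hb : v ∈ B <;> by_cases ha : v ∈ A <;> simp_all
    rw [hAB]
  · have hAB : B = Aᶜ := by
      ext v
      have hv := hrel v
      rw [h] at hv
      have h2 : (if v ∈ B then (1:ZMod 2) else 0) = (if v ∈ A then 1 else 0) + 1 := by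
        linear_combination hv - h20
      by_cases hb : v ∈ B <;> by_cases ha : v ∈ A <;> simp only [hb, ha, if_true, if_false, Finset.mem_compl, not_true_eq_false, not_false_eq_true, iff_true, iff_false, true_iff, false_iff] at h2 ⊢ <;> revert h2 <;> decide
    rw [hAB, switch_compl]
end

section
/- Let G be a graph of order n = 4k + 1. The Seidel matrix S of G is singular with a nullspace vector all of whose entries are ±1 if and only if G is switching-equivalent to a 2k-regular graph. -/
open Matrix Finset

def seidelMatrix {n : ℕ} (G : SimpleGraph (Fin n)) [DecidableRel G.Adj] :
    Matrix (Fin n) (Fin n) ℤ :=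
  Matrix.of fun i j => if i = j then 0 else if G.Adj i j then -1 else 1

instance {n : ℕ} (G : SimpleGraph (Fin n)) [DecidableRel G.Adj] (A : Finset (Fin n)) :
    DecidableRel (switchGraph G A).Adj :=
  fun v w => inferInstanceAs (Decidable (v ≠ w ∧ (G.Adj v w ↔ ((v ∈ A) ↔ (w ∈ A)))))

lemma seidel_row_sum {n : ℕ} (G : SimpleGraph (Fin n)) [DecidableRel G.Adj] (v : Fin n) :
    ∑ j, seidelMatrix G v j = (n : ℤ) - 1 - 2 * G.degree v := by
  have h : ∀ j, seidelMatrix G v j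
      = ((1 - if v = j then 1 else 0) - 2 * (if G.Adj v j then 1 else 0) : ℤ) := by
    intro j
    by_cases h : v = j
    · simp [seidelMatrix, h]
    · by_cases ha : G.Adj v j <;> simp [seidelMatrix, h, ha]
  have h2 : (∑ j : Fin n, if G.Adj v j then (1:ℤ) else 0) = G.degree v := by
    rw [Finset.sum_boole, SimpleGraph.degree, SimpleGraph.neighborFinset_eq_filter]
  simp only [h, Finset.sum_sub_distrib, ← Finset.mul_sum, h2,
    Finset.sum_ite_eq, Finset.mem_univ, if_true, Finset.sum_const, Finset.card_univ,
    Fintype.card_fin, nsmul_eq_mul, mul_one]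

lemma seidel_switch {n : ℕ} (G : SimpleGraph (Fin n)) [DecidableRel G.Adj]
    (A : Finset (Fin n)) (i j : Fin n) :
    seidelMatrix (switchGraph G A) i j
      = (if i ∈ A then (-1:ℤ) else 1) * seidelMatrix G i j * (if j ∈ A then -1 else 1) := by
  by_cases h : i = j
  · simp [seidelMatrix, h]
  · by_cases hi : i ∈ A <;> by_cases hj : j ∈ A <;> by_cases ha : G.Adj i j <;>
      simp [seidelMatrix, switchGraph, h, hi, hj, ha]

theorem seidel_pm_one_nullvector_iff_switch_regular {n k : ℕ} (hn : n = 4 * k + 1)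
    (G : SimpleGraph (Fin n)) [DecidableRel G.Adj] :
    ((seidelMatrix G).det = 0 ∧
      ∃ φ : Fin n → ℤ, (∀ i, φ i = 1 ∨ φ i = -1) ∧ (seidelMatrix G).mulVec φ = 0) ↔
    ∃ A : Finset (Fin n), ∀ v, (switchGraph G A).degree v = 2 * k := by
  constructor
  · rintro ⟨hdet, φ, hφ, hnull⟩
    refine ⟨Finset.univ.filter (fun i => φ i = -1), fun v => ?_⟩
    set A := Finset.univ.filter (fun i => φ i = -1) with hA
    have hχ : ∀ i, (if i ∈ A then (-1:ℤ) else 1) = φ i := by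
      intro i
      rcases hφ i with h | h <;> simp [hA, h]
    have hrow : ∑ j, seidelMatrix (switchGraph G A) v j = 0 := by
      have : ∑ j, seidelMatrix (switchGraph G A) v j
          = φ v * ((seidelMatrix G).mulVec φ v) := by
        simp only [seidel_switch, hχ, Matrix.mulVec, dotProduct, Finset.mul_sum]
        exact Finset.sum_congr rfl fun j _ => by ring
      rw [this, hnull]; simp
    rw [seidel_row_sum] at hrow
    subst hn
    push_cast at hrow
    omega
  · rintro ⟨A, hA⟩
    set χ : Fin n → ℤ := fun i => if i ∈ A then -1 else 1 with hχ
    have hχsq : ∀ i, χ i * χ i = 1 := by intro i; by_cases h : i ∈ A <;> simp [hχ, h]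
    have hrow : ∀ v, ∑ j, seidelMatrix (switchGraph G A) v j = 0 := by
      intro v
      rw [seidel_row_sum, hA v, hn]
      push_cast; ring
    have hmul : (seidelMatrix G).mulVec χ = 0 := by
      funext v
      have h1 : ∑ j, seidelMatrix (switchGraph G A) v j
          = χ v * ((seidelMatrix G).mulVec χ v) := by
        simp only [seidel_switch, Matrix.mulVec, dotProduct, Finset.mul_sum]
        exact Finset.sum_congr rfl fun j _ => by ring
      have h2 := hrow v
      rw [h1] at h2
      have := mul_eq_zero.mp h2
      rcases this with h | h
      · exfalso; by_cases hv : v ∈ A <;> simp [hχ, hv] at h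
      · simpa using h
    have hdet : (seidelMatrix G).det = 0 := by
      have hadj : ((seidelMatrix G).adjugate * seidelMatrix G).mulVec χ = 0 := by
        rw [← Matrix.mulVec_mulVec, hmul, Matrix.mulVec_zero]
      rw [Matrix.adjugate_mul, Matrix.smul_mulVec, Matrix.one_mulVec] at hadj
      have i : Fin n := ⟨0, by omega⟩
      have := congrFun hadj i
      simp only [Pi.smul_apply, Pi.zero_apply, smul_eq_mul] at this
      rcases mul_eq_zero.mp this with h | h
      · exact h
      · exfalso; by_cases hi : i ∈ A <;> simp [hχ, hi] at h
    exact ⟨hdet, χ, fun i => by by_cases h : i ∈ A <;> simp [hχ, h], hmul⟩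
end
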